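/- For every dominating family D ⊆ ω^ω, C_MA ⪯_T ∏_{b∈D} R_b. In particular min_{b∈D} b(R_b) ≤ non(MA) and cov(MA) ≤ d(∏_{b∈D} R_b). -/

import Mathlib

open Cardinal Set Filter

/-- A relational system `⟨X, Y, R⟩`. -/
structure RelSys : Type 1 where
  X : Type
  Y : Type
  R : X → Y → Prop

/-- Tukey connection: `A ⪯_T B`. -/
def Tukey (A B : RelSys) : Prop :=
  ∃ (φ : A.X → B.X) (ψ : B.Y → A.Y), ∀ x y, B.R (φ x) y → A.R x (ψ y)

/-- The bounding number `𝔟(A)` of a relational system. -/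
noncomputable def bnum (A : RelSys) : Cardinal :=
  sInf {c | ∃ F : Set A.X, c = #↥F ∧ ∀ y, ∃ x ∈ F, ¬ A.R x y}

/-- The dominating number `𝔡(A)` of a relational system. -/
noncomputable def dnum (A : RelSys) : Cardinal :=
  sInf {c | ∃ D : Set A.Y, c = #↥D ∧ ∀ x, ∃ y ∈ D, A.R x y}

/-- The uniformity number of a family of sets. -/
noncomputable def nonIdeal {α : Type*} (I : Set (Set α)) : Cardinal :=
  sInf {c | ∃ A : Set α, c = #↥A ∧ A ∉ I}

/-- The covering number of a family of sets. -/
noncomputable def covIdeal {α : Type*} (I : Set (Set α)) : Cardinal :=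
  sInf {c | ∃ F : Set (Set α), F ⊆ I ∧ c = #↥F ∧ ⋃₀ F = Set.univ}

/-- The Cantor space `2^ω`. -/
abbrev Cantor : Type := ℕ → Bool

/-- Coordinatewise mod-2 addition on the Cantor space. -/
def cadd (x y : Cantor) : Cantor := fun n => Bool.xor (x n) (y n)

/-- Pointwise (Minkowski) sum of two subsets of the Cantor space. -/
def sadd (A B : Set Cantor) : Set Cantor := {z | ∃ a ∈ A, ∃ b ∈ B, z = cadd a b}

/-- The ideal `MA` of meager-additive subsets of `2^ω`. -/
def MA : Set (Set Cantor) := {X | ∀ A : Set Cantor, IsMeagre A → IsMeagre (sadd A X)}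

/-- An interval partition of `ω`, with `I_n = [e n, e (n+1))`. -/
structure IntPart : Type where
  e : ℕ → ℕ
  zero : e 0 = 0
  mono : StrictMono e

/-- `f ⊏• (I, h)`. -/
def sqb (I : IntPart) (f h : ℕ → ℕ) : Prop :=
  ∀ᶠ n in atTop, ∃ k, I.e n ≤ k ∧ k < I.e (n + 1) ∧ f k = h k

/-- `∏ b` for `b ∈ ω^ω`. -/
abbrev Pb (b : ℕ → ℕ) : Type := {f : ℕ → ℕ // ∀ n, f n < b n}

/-- The relational system `R_b = ⟨∏b, 𝕀 × ∏b, ⊏•⟩`. -/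
def RbN (b : ℕ → ℕ) : RelSys :=
  ⟨Pb b, IntPart × Pb b, fun f p => sqb p.1 f.1 p.2.1⟩

namespace Stmt14Aux

/-- Basic cylinder: functions agreeing with `σ` below `N`. -/
def Cyl (σ : Cantor) (N : ℕ) : Set Cantor := {w | ∀ i < N, w i = σ i}

lemma isOpen_Cyl (σ : Cantor) (N : ℕ) : IsOpen (Cyl σ N) := by
  have h : Cyl σ N = ⋂ i ∈ Finset.range N, {w : Cantor | w i = σ i} := by
    ext w; simp [Cyl]
  rw [h]
  refine isOpen_biInter_finset fun i _ => ?_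
  have : {w : Cantor | w i = σ i} = (fun w : Cantor => w i) ⁻¹' {σ i} := rfl
  rw [this]
  exact (continuous_apply i).isOpen_preimage _ (isOpen_discrete _)

lemma exists_cyl_subset {V : Set Cantor} (hV : IsOpen V) {w : Cantor} (hw : w ∈ V) :
    ∃ N, Cyl w N ⊆ V := by
  rw [isOpen_pi_iff] at hV
  obtain ⟨I, u, h1, h2⟩ := hV w hw
  refine ⟨(I.sup id) + 1, fun v hv => h2 ?_⟩
  intro a ha
  have hlt : (a : ℕ) < I.sup id + 1 := Nat.lt_succ_of_le (Finset.le_sup (f := id) ha)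
  have : v a = w a := hv a hlt
  rw [this]; exact (h1 a ha).2

/-- Binary encoding of `x` on the window `[st, st+len)`. -/
def enc (x : Cantor) : ℕ → ℕ → ℕ
  | _, 0 => 0
  | st, (len+1) => (x st).toNat + 2 * enc x (st+1) len

lemma enc_lt (x : Cantor) : ∀ len st, enc x st len < 2 ^ len := by
  intro len
  induction len with
  | zero => intro st; simp [enc]
  | succ n ih =>
    intro st
    have h1 : (x st).toNat ≤ 1 := Bool.toNat_le _
    have h2 := ih (st + 1)
    simp only [enc]
    have : 2 ^ (n+1) = 2 * 2 ^ n := by ring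
    omega

lemma enc_testBit (x : Cantor) : ∀ len st j, j < len →
    (enc x st len).testBit j = x (st + j) := by
  intro len
  induction len with
  | zero => omega
  | succ n ih =>
    intro st j hj
    cases j with
    | zero =>
      simp only [enc, Nat.testBit_zero, Nat.add_mul_mod_self_left]
      cases hx : x st <;> simp [hx]
    | succ j =>
      have h2 : ((x st).toNat + 2 * enc x (st+1) n) / 2 = enc x (st+1) n := by
        have : (x st).toNat ≤ 1 := Bool.toNat_le _
        omega
      simp only [enc, Nat.testBit_succ, h2]
      have := ih (st + 1) j (by omega)
      rw [this]
      congr 1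
      omega

/-- The canonical coding map into `∏ b`. -/
def phi (b : ℕ → ℕ) (x : Cantor) : ℕ → ℕ := fun n => enc x n (Nat.log 2 (b n))

lemma phi_lt (b : ℕ → ℕ) (x : Cantor) (n : ℕ) (hb : 0 < b n) : phi b x n < b n :=
  lt_of_lt_of_le (enc_lt x _ n) (Nat.pow_log_le_self 2 (Nat.pos_iff_ne_zero.mp hb))

/-- Uniform extension into a dense open set over all prefixes. -/
lemma dense_open_extend {V : Set Cantor} (hV : IsOpen V) (hD : Dense V) (n : ℕ) :
    ∃ n', n < n' ∧ ∃ y : Cantor,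
      ∀ w : Cantor, (∀ i, n ≤ i → i < n' → w i = y i) → w ∈ V := by
  classical
  have key : ∀ F : Finset (Fin n → Bool), ∃ n', n ≤ n' ∧ ∃ y : Cantor,
      ∀ σ ∈ F, ∀ w : Cantor, (∀ i : Fin n, w i = σ i) →
        (∀ i, n ≤ i → i < n' → w i = y i) → w ∈ V := by
    intro F
    induction F using Finset.induction with
    | empty => exact ⟨n, le_rfl, fun _ => false, by simp⟩
    | @insert σ F hσ IH =>
      obtain ⟨n₁, hn₁, y₁, hy₁⟩ := IH
      set z : Cantor := fun i => if h : i < n then σ ⟨i, h⟩ else y₁ i with hz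
      obtain ⟨v, hvV, hvC⟩ := hD.exists_mem_open (isOpen_Cyl z n₁) ⟨z, fun _ _ => rfl⟩
      obtain ⟨N, hN⟩ := exists_cyl_subset hV hvV
      refine ⟨max n₁ N, le_trans hn₁ (le_max_left _ _), v, ?_⟩
      intro τ hτ w hpre hagree
      rcases Finset.mem_insert.mp hτ with hτσ | hτF
      · subst hτσ
        apply hN
        intro i hi
        by_cases hin : i < n
        · have h1 : w i = τ ⟨i, hin⟩ := hpre ⟨i, hin⟩
          have h2 : v i = z i := hvC i (lt_of_lt_of_le hin hn₁)
          rw [h1, h2, hz]; simp [hin]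
        · push_neg at hin
          exact hagree i hin (lt_of_lt_of_le hi (le_max_right _ _))
      · refine hy₁ τ hτF w hpre ?_
        intro i hni hi
        have h1 : w i = v i := hagree i hni (lt_of_lt_of_le hi (le_max_left _ _))
        have h2 : v i = z i := hvC i hi
        rw [h1, h2, hz]; simp [Nat.not_lt.mpr hni]
  obtain ⟨n', hn', y, hy⟩ := key Finset.univ
  refine ⟨n' + 1, by omega, y, ?_⟩
  intro w hagree
  exact hy (fun i : Fin n => w i) (Finset.mem_univ _) w (fun _ => rfl)
    (fun i h1 h2 => hagree i h1 (by omega))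

/-- Every meager set is "chopped" by some interval partition with a center. -/
lemma exists_chop {A : Set Cantor} (hA : IsMeagre A) :
    ∃ (I : IntPart) (y₀ : Cantor), ∀ a ∈ A, ∀ᶠ k in atTop,
      ∃ i, I.e k ≤ i ∧ i < I.e (k+1) ∧ a i ≠ y₀ i := by
  classical
  rw [IsMeagre, mem_residual_iff] at hA
  obtain ⟨S, hSo, hSd, hScnt, hSsub⟩ := hA
  obtain ⟨f, hf⟩ := (hScnt.insert Set.univ).exists_eq_range ⟨Set.univ, mem_insert _ _⟩
  have hfo : ∀ n, IsOpen (f n) := by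
    intro n
    have : f n ∈ insert Set.univ S := hf ▸ mem_range_self n
    rcases this with h | h
    · rw [h]; exact isOpen_univ
    · exact hSo _ h
  have hfd : ∀ n, Dense (f n) := by
    intro n
    have : f n ∈ insert Set.univ S := hf ▸ mem_range_self n
    rcases this with h | h
    · rw [h]; exact dense_univ
    · exact hSd _ h
  have hfsub : (⋂ n, f n) ⊆ Aᶜ := by
    have : ⋂₀ insert Set.univ S ⊆ Aᶜ := by
      rw [Set.sInter_insert]
      exact fun x hx => hSsub hx.2
    rwa [hf, Set.sInter_range] at this
  set V : ℕ → Set Cantor := fun k => ⋂ i ∈ Finset.range (k+1), f i with hV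
  have hVo : ∀ k, IsOpen (V k) := fun k => isOpen_biInter_finset fun i _ => hfo i
  have hVd : ∀ k, Dense (V k) := by
    intro k
    induction k with
    | zero => simpa [hV] using hfd 0
    | succ k ih =>
      have : V (k+1) = V k ∩ f (k+1) := by
        simp only [hV]
        rw [Finset.range_add_one]
        rw [Finset.set_biInter_insert]
        exact Set.inter_comm _ _
      rw [this]
      exact ih.inter_of_isOpen_left (hfd (k+1)) (hVo k)
  have hVanti : ∀ j k, j ≤ k → V k ⊆ V j := by
    intro j k hjk x hx
    simp only [hV, Set.mem_iInter] at hx ⊢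
    intro i hi
    exact hx i (Finset.mem_range.mpr (lt_of_lt_of_le (Finset.mem_range.mp hi) (by omega)))
  have hVsub : (⋂ k, V k) ⊆ Aᶜ := by
    refine subset_trans ?_ hfsub
    intro x hx
    simp only [Set.mem_iInter] at hx ⊢
    intro n
    have := hx n
    simp only [hV, Set.mem_iInter] at this
    exact this n (Finset.mem_range.mpr (by omega))
  have H : ∀ k nn, ∃ n', nn < n' ∧ ∃ y : Cantor,
      ∀ w : Cantor, (∀ i, nn ≤ i → i < n' → w i = y i) → w ∈ V k :=
    fun k nn => dense_open_extend (hVo k) (hVd k) nn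
  choose F Flt Y hY using H
  set e : ℕ → ℕ := fun k => Nat.rec 0 (fun k ih => F k ih) k with he
  have he0 : e 0 = 0 := rfl
  have hesucc : ∀ k, e (k+1) = F k (e k) := fun k => rfl
  have hemono : StrictMono e := strictMono_nat_of_lt_succ (fun k => Flt k (e k))
  set K : ℕ → ℕ := fun i => Nat.findGreatest (fun k => e k ≤ i) (i+1) with hK
  have hKle : ∀ i, e (K i) ≤ i := by
    intro i
    exact Nat.findGreatest_spec (P := fun k => e k ≤ i) (m := 0) (Nat.zero_le _)
      (by show e 0 ≤ i; rw [he0]; exact Nat.zero_le _)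
  have hKuniq : ∀ i k, e k ≤ i → i < e (k+1) → K i = k := by
    intro i k h1 h2
    have hk1 : k ≤ i := le_trans hemono.le_apply h1
    have hge : k ≤ K i := Nat.le_findGreatest (by omega) h1
    by_contra hne
    have : k + 1 ≤ K i := by omega
    have := hemono.monotone this
    have := hKle i
    omega
  refine ⟨⟨e, he0, hemono⟩, fun i => Y (K i) (e (K i)) i, ?_⟩
  intro a ha
  have : a ∉ ⋂ k, V k := fun h => (hVsub h) ha
  simp only [Set.mem_iInter] at this
  push_neg at this
  obtain ⟨k₀, hk₀⟩ := this
  rw [eventually_atTop]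
  refine ⟨k₀, fun k hk => ?_⟩
  by_contra hcon
  push_neg at hcon
  have hagree : ∀ i, e k ≤ i → i < F k (e k) → a i = Y k (e k) i := by
    intro i h1 h2
    have h2' : i < e (k+1) := by rw [hesucc]; exact h2
    have hKi : K i = k := hKuniq i k h1 h2'
    have := hcon i h1 h2'
    simpa [hKi] using this
  have : a ∈ V k := hY k (e k) a hagree
  exact hk₀ (hVanti k₀ k hk this)

/-- The key meager superset. -/
lemma meagre_big (I J : IntPart) (kk : ℕ → ℕ) (hkkmono : StrictMono kk)
    (hkkge : ∀ n, n ≤ I.e (kk n)) (c : ℕ → Cantor) :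
    IsMeagre (⋃ M : ℕ, ⋂ m, ⋂ (_ : M ≤ m), {v : Cantor | ∃ n, J.e m ≤ n ∧ n < J.e (m+1) ∧
      ∃ i, I.e (kk n) ≤ i ∧ i < I.e (kk n + 1) ∧ v i ≠ c n i}) := by
  classical
  set Dm : ℕ → Set Cantor := fun m => {v : Cantor | ∃ n, J.e m ≤ n ∧ n < J.e (m+1) ∧
      ∃ i, I.e (kk n) ≤ i ∧ i < I.e (kk n + 1) ∧ v i ≠ c n i} with hDm
  refine isMeagre_iUnion fun M => ?_
  have hclosed : ∀ m, IsClosed (Dm m) := by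
    intro m
    have heq : Dm m = ⋃ n ∈ Set.Ico (J.e m) (J.e (m+1)),
        ⋃ i ∈ Set.Ico (I.e (kk n)) (I.e (kk n + 1)), {v : Cantor | v i ≠ c n i} := by
      ext v
      simp only [hDm, Set.mem_setOf_eq, Set.mem_Ico, Set.mem_iUnion, exists_prop]
      constructor
      · rintro ⟨n, h1, h2, i, h3, h4, h5⟩
        exact ⟨n, ⟨h1, h2⟩, i, ⟨h3, h4⟩, h5⟩
      · rintro ⟨n, ⟨h1, h2⟩, i, ⟨h3, h4⟩, h5⟩
        exact ⟨n, h1, h2, i, h3, h4, h5⟩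
    rw [heq]
    refine (Set.finite_Ico _ _).isClosed_biUnion fun n _ => ?_
    refine (Set.finite_Ico _ _).isClosed_biUnion fun i _ => ?_
    have : {v : Cantor | v i ≠ c n i} = (fun v : Cantor => v i) ⁻¹' {c n i}ᶜ := rfl
    rw [this]
    exact (isClosed_discrete _).preimage (continuous_apply i)
  set TM : Set Cantor := ⋂ m, ⋂ (_ : M ≤ m), Dm m with hTM
  show IsMeagre TM
  rw [IsMeagre, mem_residual_iff]
  refine ⟨{TMᶜ}, ?_, ?_, Set.countable_singleton _, by simp⟩
  · rintro t rfl
    · exact (isClosed_iInter fun m => isClosed_iInter fun _ => hclosed m).isOpen_compl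
  · rintro t rfl
    rw [dense_iff_inter_open]
    rintro U hU ⟨w, hw⟩
    obtain ⟨N, hN⟩ := exists_cyl_subset hU hw
    set m := max M N with hm
    have hJm : N ≤ J.e m := le_trans (le_max_right _ _) J.mono.le_apply
    set v : Cantor := fun i =>
      if hex : ∃ n, J.e m ≤ n ∧ n < J.e (m+1) ∧ I.e (kk n) ≤ i ∧ i < I.e (kk n + 1)
      then c (Classical.choose hex) i else w i with hv
    have hvC : v ∈ Cyl w N := by
      intro i hiN
      have hnex : ¬ ∃ n, J.e m ≤ n ∧ n < J.e (m+1) ∧ I.e (kk n) ≤ i ∧ i < I.e (kk n + 1) := by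
        rintro ⟨n, h1, h2, h3, h4⟩
        have : n ≤ I.e (kk n) := hkkge n
        omega
      simp only [hv, dif_neg hnex]
    have hvD : v ∉ Dm m := by
      rintro ⟨n, h1, h2, i, h3, h4, hne⟩
      have hex : ∃ n, J.e m ≤ n ∧ n < J.e (m+1) ∧ I.e (kk n) ≤ i ∧ i < I.e (kk n + 1) :=
        ⟨n, h1, h2, h3, h4⟩
      obtain ⟨h1', h2', h3', h4'⟩ := Classical.choose_spec hex
      set n' := Classical.choose hex
      have hkkeq : kk n' = kk n := by
        rcases lt_trichotomy (kk n') (kk n) with hlt | heq | hgt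
        · have : I.e (kk n' + 1) ≤ I.e (kk n) := I.mono.monotone hlt
          omega
        · exact heq
        · have : I.e (kk n + 1) ≤ I.e (kk n') := I.mono.monotone hgt
          omega
      have hneq : n' = n := hkkmono.injective hkkeq
      apply hne
      have : v i = c n' i := by simp only [hv, dif_pos hex]; rfl
      rw [this, hneq]
    refine ⟨v, hN hvC, ?_⟩
    intro hvTM
    simp only [hTM, Set.mem_iInter] at hvTM
    exact hvD (hvTM m (le_max_left _ _))

lemma MA_mono {X X' : Set Cantor} (hX : X ∈ MA) (hs : X' ⊆ X) : X' ∈ MA := by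
  intro A hA
  refine (hX A hA).mono ?_
  rintro z ⟨a, ha, x, hx, rfl⟩
  exact ⟨a, ha, x, hs hx, rfl⟩

lemma singleton_meagre (z : Cantor) : IsMeagre ({z} : Set Cantor) := by
  rw [IsMeagre, mem_residual_iff]
  refine ⟨{({z} : Set Cantor)ᶜ}, ?_, ?_, Set.countable_singleton _, by simp⟩
  · rintro t rfl
    exact isClosed_singleton.isOpen_compl
  · rintro t rfl
    rw [dense_iff_inter_open]
    rintro U hU ⟨w, hw⟩
    by_cases hzw : w = z
    · obtain ⟨N, hN⟩ := exists_cyl_subset hU hw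
      refine ⟨fun i => if i = N then !(w i) else w i, hN ?_, ?_⟩
      · intro i hi
        simp [Nat.ne_of_lt hi]
      · simp only [Set.mem_compl_iff, Set.mem_singleton_iff]
        intro hEq
        have := congrFun hEq N
        simp only [if_pos rfl] at this
        rw [hzw] at hw
        rw [← hzw] at this
        exact (Bool.not_ne_self (w N)) this
    · exact ⟨w, hw, by simpa using hzw⟩

lemma univ_not_MA : (Set.univ : Set Cantor) ∉ MA := by
  intro h
  have h1 : IsMeagre (sadd {fun _ => false} Set.univ) := h _ (singleton_meagre _)
  have h2 : sadd {(fun _ => false : Cantor)} Set.univ = Set.univ := by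
    ext z
    simp only [sadd, Set.mem_setOf_eq, Set.mem_univ, iff_true]
    refine ⟨_, rfl, z, trivial, ?_⟩
    funext n
    simp [cadd]
  rw [h2] at h1
  rw [IsMeagre] at h1
  have hD : Dense ((Set.univ : Set Cantor)ᶜ) := dense_of_mem_residual h1
  rw [Set.compl_univ] at hD
  obtain ⟨x, hx⟩ := hD.nonempty
  exact hx

/-- The heart of the matter: each `ψ`-set is meager-additive. -/
lemma Smem (D : Set (ℕ → ℕ))
    (hdom : ∀ g : ℕ → ℕ, ∃ f ∈ D, ∀ᶠ n in atTop, g n ≤ f n)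
    (y : ∀ b : D, IntPart × Pb b.1) :
    {x : Cantor | ∀ b : D, sqb (y b).1 (phi b.1 x) ((y b).2).1} ∈ MA := by
  classical
  intro A hA
  obtain ⟨I, y₀, hIy⟩ := exists_chop hA
  have hμex : ∀ n : ℕ, ∃ j, n ≤ I.e j := fun n => ⟨n, I.mono.le_apply⟩
  set μ : ℕ → ℕ := fun n => Nat.find (hμex n) with hμ
  have hμspec : ∀ n, n ≤ I.e (μ n) := fun n => Nat.find_spec (hμex n)
  have hμmono : Monotone μ := fun n n' hnn' => Nat.find_mono (fun j hj => le_trans hnn' hj)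
  set kk : ℕ → ℕ := fun n => μ n + n with hkk
  have hkkmono : StrictMono kk := by
    intro n n' hlt
    have := hμmono hlt.le
    simp only [hkk]
    omega
  have hnkk : ∀ n, n ≤ kk n := by
    intro n; simp only [hkk]; omega
  have hkkge : ∀ n, n ≤ I.e (kk n) := by
    intro n
    refine le_trans (hμspec n) (I.mono.monotone ?_)
    simp only [hkk]; omega
  obtain ⟨b, hbD, hbg⟩ := hdom (fun n => 2 ^ (I.e (kk n + 1)))
  set J : IntPart := (y ⟨b, hbD⟩).1 with hJ
  set hf : ℕ → ℕ := ((y ⟨b, hbD⟩).2).1 with hhf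
  set c : ℕ → Cantor := fun n i => Bool.xor (y₀ i) ((hf n).testBit (i - n)) with hc
  refine IsMeagre.mono ?_ (meagre_big I J kk hkkmono hkkge c)
  rintro z ⟨a, ha, x, hx, rfl⟩
  have hsq : sqb J (phi b x) hf := hx ⟨b, hbD⟩
  obtain ⟨m₁, hm₁⟩ := eventually_atTop.mp hsq
  obtain ⟨k₁, hk₁⟩ := eventually_atTop.mp (hIy a ha)
  obtain ⟨n₁, hn₁⟩ := eventually_atTop.mp hbg
  refine Set.mem_iUnion.mpr ⟨max m₁ (max k₁ n₁), ?_⟩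
  simp only [Set.mem_iInter]
  intro m hm
  obtain ⟨n, hn1, hn2, hfh⟩ := hm₁ m (by omega)
  have hmn : m ≤ n := le_trans J.mono.le_apply hn1
  have hnn : n ≤ kk n := hnkk n
  obtain ⟨i, hi1, hi2, hia⟩ := hk₁ (kk n) (by omega)
  have hgb : 2 ^ (I.e (kk n + 1)) ≤ b n := hn₁ n (by omega)
  have hwin : I.e (kk n + 1) ≤ Nat.log 2 (b n) := by
    calc I.e (kk n + 1) = Nat.log 2 (2 ^ (I.e (kk n + 1))) := (Nat.log_pow one_lt_two _).symm
    _ ≤ Nat.log 2 (b n) := Nat.log_mono_right hgb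
  have hin : n ≤ i := le_trans (hkkge n) hi1
  have hxi : x i = (hf n).testBit (i - n) := by
    have hlt : i - n < Nat.log 2 (b n) := by omega
    have h3 := enc_testBit x (Nat.log 2 (b n)) n (i - n) hlt
    rw [Nat.add_sub_cancel' hin] at h3
    rw [← hfh]
    exact h3.symm
  refine ⟨n, hn1, hn2, i, hi1, hi2, ?_⟩
  show Bool.xor (a i) (x i) ≠ c n i
  simp only [hc]
  rw [hxi]
  intro hEq
  apply hia
  cases hT : (hf n).testBit (i - n) <;> rw [hT] at hEq <;> simpa using hEq

end Stmt14Aux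


/-- For every dominating family `D ⊆ ω^ω` (of positive functions),
`C_MA ⪯_T ∏_{b∈D} R_b`; in particular `min_{b∈D} 𝔟(R_b) ≤ non(MA)` and
`cov(MA) ≤ 𝔡(∏_{b∈D} R_b)`. -/
theorem stmt14 (D : Set (ℕ → ℕ)) (hpos : ∀ b ∈ D, ∀ n, 0 < b n)
    (hdom : ∀ g : ℕ → ℕ, ∃ f ∈ D, ∀ᶠ n in atTop, g n ≤ f n) :
    Tukey ⟨Cantor, ↥MA, fun x A => x ∈ A.1⟩
      ⟨∀ b : D, Pb b.1, ∀ b : D, IntPart × Pb b.1,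
        fun x y => ∀ b : D, sqb (y b).1 (x b).1 (y b).2.1⟩ ∧
    (⨅ b : D, bnum (RbN b.1)) ≤ nonIdeal MA ∧
    covIdeal MA ≤ dnum ⟨∀ b : D, Pb b.1, ∀ b : D, IntPart × Pb b.1,
        fun x y => ∀ b : D, sqb (y b).1 (x b).1 (y b).2.1⟩ := by
  classical
  set φ : Cantor → ∀ b : D, Pb b.1 :=
    fun x b => ⟨Stmt14Aux.phi b.1 x, fun n => Stmt14Aux.phi_lt b.1 x n (hpos b.1 b.2 n)⟩ with hφ
  set S : (∀ b : D, IntPart × Pb b.1) → Set Cantor :=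
    fun y => {x : Cantor | ∀ b : D, sqb (y b).1 (Stmt14Aux.phi b.1 x) ((y b).2).1} with hS
  have hSMA : ∀ y, S y ∈ MA := fun y => Stmt14Aux.Smem D hdom y
  refine ⟨⟨φ, fun y => ⟨S y, hSMA y⟩, ?_⟩, ?_, ?_⟩
  · intro x y hxy
    exact fun b => hxy b
  · refine le_csInf ⟨#(Set.univ : Set Cantor), Set.univ, rfl, Stmt14Aux.univ_not_MA⟩ ?_
    rintro c ⟨A, rfl, hA⟩
    by_cases hQ : ∀ b : D, ∃ p : IntPart × Pb b.1, ∀ x ∈ A, sqb p.1 (Stmt14Aux.phi b.1 x) (p.2).1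
    · exfalso
      choose yy hyy using hQ
      exact hA (Stmt14Aux.MA_mono (hSMA yy) (fun x hx b => hyy b x hx))
    · push_neg at hQ
      obtain ⟨b, hb⟩ := hQ
      have h1 : bnum (RbN b.1) ≤ #((fun x => φ x b) '' A) := by
        refine csInf_le (OrderBot.bddBelow _) ?_
        refine ⟨(fun x => φ x b) '' A, rfl, ?_⟩
        intro p
        obtain ⟨x, hxA, hnx⟩ := hb p
        exact ⟨φ x b, Set.mem_image_of_mem _ hxA, hnx⟩
      calc (⨅ b : D, bnum (RbN b.1)) ≤ bnum (RbN b.1) := ciInf_le' _ b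
      _ ≤ #((fun x => φ x b) '' A) := h1
      _ ≤ #A := Cardinal.mk_image_le
  · refine le_csInf ?_ ?_
    · refine ⟨#(Set.univ : Set (∀ b : D, IntPart × Pb b.1)), Set.univ, rfl, ?_⟩
      intro x
      refine ⟨fun b => (⟨id, rfl, strictMono_id⟩, x b), Set.mem_univ _, ?_⟩
      intro b
      exact Filter.Eventually.of_forall fun n => ⟨n, le_rfl, Nat.lt_succ_self n, rfl⟩
    · rintro c ⟨E, rfl, hE⟩
      have h1 : covIdeal MA ≤ #(S '' E) := by
        refine csInf_le (OrderBot.bddBelow _) ?_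
        refine ⟨S '' E, ?_, rfl, ?_⟩
        · rintro T ⟨y, hyE, rfl⟩
          exact hSMA y
        · ext x
          simp only [Set.mem_sUnion, Set.mem_univ, iff_true]
          obtain ⟨y, hyE, hR⟩ := hE (φ x)
          exact ⟨S y, Set.mem_image_of_mem _ hyE, fun b => hR b⟩
      exact le_trans h1 Cardinal.mk_image_le
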